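/- Let C₁ and C₂ be strongly connected components in PA*01, both with alive exit states. Then C₁‖C₂ is a strongly connected component with alive exit states too, and for all p ∈ C₁ and q ∈ C₂, Extⁿ(p‖q) = (Extⁿ(p)‖q) ∪ (p‖Extⁿ(q)), where Extⁿ(p‖q) is computed with respect to the SCC C₁‖C₂, Extⁿ(p) with respect to C₁, Extⁿ(q) with respect to C₂, E‖q = {(a,r‖q) | (a,r) ∈ E}, and p‖E = {(a,p‖r) | (a,r) ∈ E}. -/
import Mathlib


/-- PA*01 expressions over an action set `Act`. -/
inductive PExpr (Act : Type) : Type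
  | dl : PExpr Act
  | emp : PExpr Act
  | act : Act → PExpr Act
  | seq : PExpr Act → PExpr Act → PExpr Act
  | alt : PExpr Act → PExpr Act → PExpr Act
  | star : PExpr Act → PExpr Act
  | par : PExpr Act → PExpr Act → PExpr Act

variable {Act : Type}

/-- The termination predicate `↓` of PA*01. -/
inductive PTerm : PExpr Act → Prop
  | emp : PTerm PExpr.emp
  | altl {p q : PExpr Act} : PTerm p → PTerm (PExpr.alt p q)
  | altr {p q : PExpr Act} : PTerm q → PTerm (PExpr.alt p q)
  | seq {p q : PExpr Act} : PTerm p → PTerm q → PTerm (PExpr.seq p q)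
  | star {p : PExpr Act} : PTerm (PExpr.star p)
  | par {p q : PExpr Act} : PTerm p → PTerm q → PTerm (PExpr.par p q)

/-- The transition relation `p →a p'` of PA*01 (pure interleaving). -/
inductive PStep : PExpr Act → Act → PExpr Act → Prop
  | act {a : Act} : PStep (PExpr.act a) a PExpr.emp
  | altl {p q p' : PExpr Act} {a : Act} : PStep p a p' → PStep (PExpr.alt p q) a p'
  | altr {p q q' : PExpr Act} {a : Act} : PStep q a q' → PStep (PExpr.alt p q) a q'
  | seql {p q p' : PExpr Act} {a : Act} :
      PStep p a p' → PStep (PExpr.seq p q) a (PExpr.seq p' q)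
  | seqr {p q q' : PExpr Act} {a : Act} :
      PTerm p → PStep q a q' → PStep (PExpr.seq p q) a q'
  | star {p p' : PExpr Act} {a : Act} :
      PStep p a p' → PStep (PExpr.star p) a (PExpr.seq p' (PExpr.star p))
  | parl {p q p' : PExpr Act} {a : Act} :
      PStep p a p' → PStep (PExpr.par p q) a (PExpr.par p' q)
  | parr {p q q' : PExpr Act} {a : Act} :
      PStep q a q' → PStep (PExpr.par p q) a (PExpr.par p q')

/-- `p → p'`: a transition with some label. -/
def PStepAny (p q : PExpr Act) : Prop := ∃ a, PStep p a q

/-- `p →* p'`: reachability. -/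
def PReach (p q : PExpr Act) : Prop := Relation.ReflTransGen PStepAny p q

/-- `p` is normed: some terminating expression is reachable from `p`. -/
def PNormed (p : PExpr Act) : Prop := ∃ q, PReach p q ∧ PTerm q

/-- A strongly connected component: a maximal set of mutually reachable states. -/
def IsSCC (C : Set (PExpr Act)) : Prop :=
  (∀ s ∈ C, ∀ t ∈ C, PReach s t) ∧
    ∀ D : Set (PExpr Act), C ⊆ D → (∀ s ∈ D, ∀ t ∈ D, PReach s t) → D = C

/-- A trivial SCC: a singleton `{s}` with no transition `s → s`. -/
def IsTrivialSCC (C : Set (PExpr Act)) : Prop := ∃ s, C = {s} ∧ ¬ PStepAny s s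

/-- `C · q = { p · q | p ∈ C }`. -/
def seqSet (C : Set (PExpr Act)) (q : PExpr Act) : Set (PExpr Act) :=
  (fun p => PExpr.seq p q) '' C

/-- `C₁ ‖ C₂ = { p ‖ q | p ∈ C₁, q ∈ C₂ }`. -/
def parSet (C₁ C₂ : Set (PExpr Act)) : Set (PExpr Act) :=
  Set.image2 PExpr.par C₁ C₂

/-- A basic SCC: `C = C' · q*` for some set `C'` that is not an SCC. -/
def IsBasic (C : Set (PExpr Act)) : Prop :=
  ∃ (C' : Set (PExpr Act)) (q : PExpr Act), C = seqSet C' (PExpr.star q) ∧ ¬ IsSCC C'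

/-- The set `Extⁿ(s)` of normed exit transitions from `s`, w.r.t. the SCC `C`. -/
def ExtN (C : Set (PExpr Act)) (s : PExpr Act) : Set (Act × PExpr Act) :=
  {e | PStep s e.1 e.2 ∧ e.2 ∉ C ∧ PNormed e.2}

/-- `s ∈ C` is an alive exit state if `s↓` or `s` has a normed exit transition. -/
def AliveExit (C : Set (PExpr Act)) (s : PExpr Act) : Prop :=
  s ∈ C ∧ (PTerm s ∨ ∃ e, e ∈ ExtN C s)

/-- `E · q = { (a, r · q) | (a, r) ∈ E }`. -/
def extSeq (E : Set (Act × PExpr Act)) (q : PExpr Act) : Set (Act × PExpr Act) :=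
  (fun e => (e.1, PExpr.seq e.2 q)) '' E

/-- `E ‖ q = { (a, r ‖ q) | (a, r) ∈ E }`. -/
def extParL (E : Set (Act × PExpr Act)) (q : PExpr Act) : Set (Act × PExpr Act) :=
  (fun e => (e.1, PExpr.par e.2 q)) '' E

/-- `p ‖ E = { (a, p ‖ r) | (a, r) ∈ E }`. -/
def extParR (p : PExpr Act) (E : Set (Act × PExpr Act)) : Set (Act × PExpr Act) :=
  (fun e => (e.1, PExpr.par p e.2)) '' E

/-- `s` and `s'` belong to the same strongly connected component. -/
def SameSCC (s s' : PExpr Act) : Prop := ∃ C : Set (PExpr Act), IsSCC C ∧ s ∈ C ∧ s' ∈ C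

/-- The equivalence `∼` on exit transitions: same action, targets in the same SCC. -/
def ExitEquiv (e e' : Act × PExpr Act) : Prop := e.1 = e'.1 ∧ SameSCC e.2 e'.2

/-- Is the expression a star expression? -/
def isStarP : PExpr Act → Bool
  | PExpr.star _ => true
  | _ => false

/-- The measure `OC` on PA*01 expressions. -/
def OC : PExpr Act → ℕ
  | PExpr.dl => 0
  | PExpr.emp => 0
  | PExpr.act _ => 1
  | PExpr.seq _ q => if isStarP q then 0 else OC q + 1
  | PExpr.alt p q => max (OC p) (OC q) + 1
  | PExpr.star _ => 1
  | PExpr.par _ _ => 0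

/-- A PA*01 expression without occurrences of `‖` is a BPA*01 expression. -/
def NoPar : PExpr Act → Prop
  | PExpr.dl => True
  | PExpr.emp => True
  | PExpr.act _ => True
  | PExpr.seq p q => NoPar p ∧ NoPar q
  | PExpr.alt p q => NoPar p ∧ NoPar q
  | PExpr.star p => NoPar p
  | PExpr.par _ _ => False

/-- Bisimulations on PA*01 expressions. -/
def IsBisimulation (R : PExpr Act → PExpr Act → Prop) : Prop :=
  ∀ p q, R p q →
    (∀ a p', PStep p a p' → ∃ q', PStep q a q' ∧ R p' q') ∧
    (∀ a q', PStep q a q' → ∃ p', PStep p a p' ∧ R p' q') ∧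
    (PTerm p ↔ PTerm q)

/-- Bisimilarity of PA*01 expressions. -/
def Bisimilar (p q : PExpr Act) : Prop :=
  ∃ R : PExpr Act → PExpr Act → Prop, IsBisimulation R ∧ R p q

section Aux

lemma reach_parl {p p' q : PExpr Act} (h : PReach p p') :
    PReach (PExpr.par p q) (PExpr.par p' q) := by
  induction h with
  | refl => exact Relation.ReflTransGen.refl
  | tail _ h2 ih =>
    obtain ⟨a, ha⟩ := h2
    exact ih.tail ⟨a, PStep.parl ha⟩

lemma reach_parr {p q q' : PExpr Act} (h : PReach q q') :
    PReach (PExpr.par p q) (PExpr.par p q') := by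
  induction h with
  | refl => exact Relation.ReflTransGen.refl
  | tail _ h2 ih =>
    obtain ⟨a, ha⟩ := h2
    exact ih.tail ⟨a, PStep.parr ha⟩

lemma par_reach_inv {p q d : PExpr Act} (h : PReach (PExpr.par p q) d) :
    ∃ p' q', d = PExpr.par p' q' ∧ PReach p p' ∧ PReach q q' := by
  induction h with
  | refl => exact ⟨p, q, rfl, Relation.ReflTransGen.refl, Relation.ReflTransGen.refl⟩
  | tail _ h2 ih =>
    obtain ⟨p', q', rfl, hp, hq⟩ := ih
    obtain ⟨a, hs⟩ := h2
    cases hs with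
    | parl hs => exact ⟨_, q', rfl, hp.tail ⟨a, hs⟩, hq⟩
    | parr hs => exact ⟨p', _, rfl, hp, hq.tail ⟨a, hs⟩⟩

lemma normed_par {p q : PExpr Act} :
    PNormed (PExpr.par p q) ↔ PNormed p ∧ PNormed q := by
  constructor
  · rintro ⟨t, hr, ht⟩
    obtain ⟨p', q', rfl, hp, hq⟩ := par_reach_inv hr
    cases ht with
    | par htp htq => exact ⟨⟨p', hp, htp⟩, ⟨q', hq, htq⟩⟩
  · rintro ⟨⟨p', hp, htp⟩, ⟨q', hq, htq⟩⟩
    exact ⟨PExpr.par p' q', (reach_parl hp).trans (reach_parr hq), PTerm.par htp htq⟩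

lemma mem_parSet {C₁ C₂ : Set (PExpr Act)} {p q : PExpr Act} :
    PExpr.par p q ∈ parSet C₁ C₂ ↔ p ∈ C₁ ∧ q ∈ C₂ := by
  constructor
  · rintro ⟨x, hx, y, hy, hxy⟩
    obtain ⟨rfl, rfl⟩ := PExpr.par.injEq .. ▸ hxy
    exact ⟨hx, hy⟩
  · rintro ⟨h1, h2⟩
    exact ⟨p, h1, q, h2, rfl⟩

lemma mem_scc_of_mutual {C : Set (PExpr Act)} (h : IsSCC C) {x y : PExpr Act}
    (hx : x ∈ C) (hxy : PReach x y) (hyx : PReach y x) : y ∈ C := by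
  have hD := h.2 (insert y C) (Set.subset_insert _ _) ?_
  · rw [← hD]; exact Set.mem_insert _ _
  · intro s hs t ht
    rcases Set.mem_insert_iff.1 hs with hs' | hs'
    · rcases Set.mem_insert_iff.1 ht with ht' | ht'
      · subst hs'; subst ht'; exact Relation.ReflTransGen.refl
      · subst hs'; exact hyx.trans (h.1 x hx t ht')
    · rcases Set.mem_insert_iff.1 ht with ht' | ht'
      · subst ht'; exact (h.1 s hs' x hx).trans hxy
      · exact h.1 s hs' t ht'

lemma normed_of_reach {p q : PExpr Act} (h : PReach p q) (hn : PNormed q) :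
    PNormed p := by
  obtain ⟨t, hr, ht⟩ := hn
  exact ⟨t, h.trans hr, ht⟩

lemma alive_normed {C : Set (PExpr Act)} {s : PExpr Act} (h : AliveExit C s) :
    PNormed s := by
  rcases h.2 with ht | ⟨⟨a, r⟩, hs, _, hn⟩
  · exact ⟨s, Relation.ReflTransGen.refl, ht⟩
  · exact normed_of_reach (Relation.ReflTransGen.single ⟨a, hs⟩) hn

lemma normed_of_scc {C : Set (PExpr Act)} (h : IsSCC C) {s q : PExpr Act}
    (hs : AliveExit C s) (hq : q ∈ C) : PNormed q :=
  normed_of_reach (h.1 q hq s hs.1) (alive_normed hs)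

end Aux

/-- If `C₁` and `C₂` are SCCs in PA*01, both with alive exit
states, then `C₁ ‖ C₂` is an SCC with alive exit states, and for all `p ∈ C₁`
and `q ∈ C₂`: `Extⁿ(p ‖ q) = (Extⁿ(p) ‖ q) ∪ (p ‖ Extⁿ(q))`. -/
theorem par_extn {Act : Type} [Nonempty Act] {C₁ C₂ : Set (PExpr Act)}
    (h₁ : IsSCC C₁) (h₂ : IsSCC C₂)
    (ha₁ : ∃ s, AliveExit C₁ s) (ha₂ : ∃ s, AliveExit C₂ s) :
    IsSCC (parSet C₁ C₂) ∧ (∃ s, AliveExit (parSet C₁ C₂) s) ∧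
      ∀ p ∈ C₁, ∀ q ∈ C₂,
        ExtN (parSet C₁ C₂) (PExpr.par p q) =
          extParL (ExtN C₁ p) q ∪ extParR p (ExtN C₂ q) := by
  obtain ⟨s₁, hs₁⟩ := ha₁
  obtain ⟨s₂, hs₂⟩ := ha₂
  have hs₁C : s₁ ∈ C₁ := hs₁.1
  have hs₂C : s₂ ∈ C₂ := hs₂.1
  -- SCC
  have hscc : IsSCC (parSet C₁ C₂) := by
    constructor
    · rintro _ ⟨x, hx, y, hy, rfl⟩ _ ⟨x', hx', y', hy', rfl⟩
      exact (reach_parl (h₁.1 x hx x' hx')).trans (reach_parr (h₂.1 y hy y' hy'))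
    · intro D hsub hmut
      refine Set.Subset.antisymm (fun d hd => ?_) hsub
      have hbase : PExpr.par s₁ s₂ ∈ D := hsub (mem_parSet.mpr ⟨hs₁C, hs₂C⟩)
      have h1 : PReach (PExpr.par s₁ s₂) d := hmut _ hbase _ hd
      have h2 : PReach d (PExpr.par s₁ s₂) := hmut _ hd _ hbase
      obtain ⟨p', q', rfl, hp, hq⟩ := par_reach_inv h1
      obtain ⟨p'', q'', heq, hp', hq'⟩ := par_reach_inv h2
      obtain ⟨rfl, rfl⟩ := PExpr.par.injEq .. ▸ heq
      exact mem_parSet.mpr ⟨mem_scc_of_mutual h₁ hs₁C hp hp',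
        mem_scc_of_mutual h₂ hs₂C hq hq'⟩
  refine ⟨hscc, ⟨PExpr.par s₁ s₂, mem_parSet.mpr ⟨hs₁C, hs₂C⟩, ?_⟩, ?_⟩
  -- alive exit state
  · rcases hs₁.2 with ht1 | ⟨⟨a, r⟩, hst, hrC, hrn⟩
    · rcases hs₂.2 with ht2 | ⟨⟨a, r⟩, hst, hrC, hrn⟩
      · exact Or.inl (PTerm.par ht1 ht2)
      · refine Or.inr ⟨(a, PExpr.par s₁ r), PStep.parr hst, ?_,
          normed_par.mpr ⟨alive_normed hs₁, hrn⟩⟩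
        exact fun hmem => hrC (mem_parSet.mp hmem).2
    · refine Or.inr ⟨(a, PExpr.par r s₂), PStep.parl hst, ?_,
        normed_par.mpr ⟨hrn, alive_normed hs₂⟩⟩
      exact fun hmem => hrC (mem_parSet.mp hmem).1
  -- ExtN equality
  · intro p hp q hq
    have hpn : PNormed p := normed_of_scc h₁ hs₁ hp
    have hqn : PNormed q := normed_of_scc h₂ hs₂ hq
    ext ⟨a, r⟩
    constructor
    · rintro ⟨hstep, hnot, hnorm⟩
      cases hstep with
      | @parl _ _ p' _ h =>
        exact Or.inl ⟨(a, p'), ⟨h, fun hmem => hnot (mem_parSet.mpr ⟨hmem, hq⟩),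
          (normed_par.mp hnorm).1⟩, rfl⟩
      | @parr _ _ q' _ h =>
        exact Or.inr ⟨(a, q'), ⟨h, fun hmem => hnot (mem_parSet.mpr ⟨hp, hmem⟩),
          (normed_par.mp hnorm).2⟩, rfl⟩
    · rintro (⟨⟨a', r'⟩, ⟨hst, hrC, hrn⟩, heq⟩ | ⟨⟨a', r'⟩, ⟨hst, hrC, hrn⟩, heq⟩) <;>
        cases heq
      · exact ⟨PStep.parl hst, fun hmem => hrC (mem_parSet.mp hmem).1,
          normed_par.mpr ⟨hrn, hqn⟩⟩
      · exact ⟨PStep.parr hst, fun hmem => hrC (mem_parSet.mp hmem).2,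
          normed_par.mpr ⟨hpn, hrn⟩⟩
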